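/- In the category Span(Set) of sets and isomorphism classes of spans, the two canonical classes (spans with identity forward leg, and spans with identity backward leg) do NOT form an orthogonal factorization system: concretely, the span (!,!) : * → * given by the two-element set 2 with both legs the unique maps admits the factorization [!,1]∘[1,!] through 2, and both the identity span on 2 and the span [sw,1] given by the nontrivial automorphism sw of 2 are (distinct) comparison morphisms between this factorization and itself, violating uniqueness of the comparison morphism. -/

import Mathlib

open CategoryTheory

universe u v

namespace Paper

/-- A span from `a` to `b` in `C`. -/
structure SpanCorner (C : Type u) [Category.{v} C] (a b : C) : Type (max u v) where
  mid : C
  l : mid ⟶ a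
  r : mid ⟶ b

/-- Isomorphism of spans. -/
def SpanRel (C : Type u) [Category.{v} C] {a b : C} (s t : SpanCorner C a b) : Prop :=
  ∃ e : s.mid ≅ t.mid, e.hom ≫ t.l = s.l ∧ e.hom ≫ t.r = s.r

/-- Morphisms of the span category: isomorphism classes of spans. -/
def SpanHom (C : Type u) [Category.{v} C] (a b : C) : Type (max u v) :=
  Quot (fun s t : SpanCorner C a b => SpanRel C s t)

def mkSpan {C : Type u} [Category.{v} C] {a b : C} (mid : C) (l : mid ⟶ a) (r : mid ⟶ b) :
    SpanHom C a b :=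
  Quot.mk _ ⟨mid, l, r⟩

/-- The category `Span C`: a composition of classes of spans, computed by (any)
pullback, which is unital and associative. -/
structure SpanCat (C : Type u) [Category.{v} C] where
  comp : ∀ {a b c : C}, SpanHom C a b → SpanHom C b c → SpanHom C a c
  compat : ∀ {a b c : C} (s : SpanCorner C a b) (t : SpanCorner C b c)
    (P : C) (p1 : P ⟶ s.mid) (p2 : P ⟶ t.mid),
    IsPullback p1 p2 s.r t.l →
    comp (Quot.mk _ s) (Quot.mk _ t) = mkSpan P (p1 ≫ s.l) (p2 ≫ t.r)
  id_comp : ∀ {a b : C} (f : SpanHom C a b), comp (mkSpan a (𝟙 a) (𝟙 a)) f = f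
  comp_id : ∀ {a b : C} (f : SpanHom C a b), comp f (mkSpan b (𝟙 b) (𝟙 b)) = f
  assoc : ∀ {a b c d : C} (f : SpanHom C a b) (g : SpanHom C b c) (h : SpanHom C c d),
    comp (comp f g) h = comp f (comp g h)

/-- The class of spans with identity forward leg. -/
def SpanInE {C : Type u} [Category.{v} C] {a b : C} (f : SpanHom C a b) : Prop :=
  ∃ u : b ⟶ a, f = mkSpan b u (𝟙 b)

/-- The class of spans with identity backward leg. -/
def SpanInM {C : Type u} [Category.{v} C] {a b : C} (f : SpanHom C a b) : Prop :=
  ∃ g : a ⟶ b, f = mkSpan a (𝟙 a) g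

/-- Left lifting property against all maps in `M`. -/
def SpanLLP {C : Type u} [Category.{v} C] (S : SpanCat C)
    (M : ∀ {x y : C}, SpanHom C x y → Prop) {a b : C} (f : SpanHom C a b) : Prop :=
  ∀ {x y : C} (m : SpanHom C x y), M m →
    ∀ (u : SpanHom C a x) (v : SpanHom C b y), S.comp f v = S.comp u m →
      ∃ d : SpanHom C b x, S.comp f d = u ∧ S.comp d m = v

/-- Right lifting property against all maps in `E`. -/
def SpanRLP {C : Type u} [Category.{v} C] (S : SpanCat C)
    (E : ∀ {x y : C}, SpanHom C x y → Prop) {x y : C} (m : SpanHom C x y) : Prop :=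
  ∀ {a b : C} (f : SpanHom C a b), E f →
    ∀ (u : SpanHom C a x) (v : SpanHom C b y), S.comp f v = S.comp u m →
      ∃ d : SpanHom C b x, S.comp f d = u ∧ S.comp d m = v

end Paper

namespace Paper

/-- The swap automorphism of the two-element set. -/
def sw : Bool ⟶ Bool := TypeCat.ofHom fun b => !b

/-- The unique map to a point. -/
def bang : Bool ⟶ PUnit.{1} := TypeCat.ofHom fun _ => PUnit.unit


private theorem spanRel_equiv (C : Type u) [Category.{v} C] (a b : C) :
    Equivalence (fun s t : SpanCorner C a b => SpanRel C s t) := by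
  constructor
  · intro s; exact ⟨Iso.refl _, by simp, by simp⟩
  · rintro s t ⟨e, h1, h2⟩
    exact ⟨e.symm, by rw [← h1]; simp, by rw [← h2]; simp⟩
  · rintro s t w ⟨e, h1, h2⟩ ⟨f, h3, h4⟩
    exact ⟨e.trans f, by simp [← h1, ← h3], by simp [← h2, ← h4]⟩

private theorem mkSpan_eq_iff {C : Type u} [Category.{v} C] {a b : C}
    {m m' : C} {l : m ⟶ a} {r : m ⟶ b} {l' : m' ⟶ a} {r' : m' ⟶ b} :
    mkSpan m l r = mkSpan m' l' r' ↔ SpanRel C ⟨m, l, r⟩ ⟨m', l', r'⟩ := by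
  exact ⟨fun h => (Equivalence.eqvGen_iff (spanRel_equiv C a b)).mp (Quot.eq.mp h),
    fun h => Quot.sound h⟩

private def swIso : Bool ≅ Bool where
  hom := sw
  inv := sw
  hom_inv_id := by ext x; cases x <;> rfl
  inv_hom_id := by ext x; cases x <;> rfl

instance : IsIso sw := ⟨sw, swIso.hom_inv_id, swIso.inv_hom_id⟩

/-- In `Span(Set)` the two canonical classes do not form an
orthogonal factorization system: `[sw,1] ≠ [1,1]`, the span `(!,!) : * → *` through `2`
factors as `[!,1]` followed by `[1,!]`, and both the identity span on `2` and `[sw,1]`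
are comparison morphisms between this factorization and itself — so comparison
morphisms are not unique. -/
theorem statement18 (S : SpanCat (Type 0)) :
    -- [sw, 1] is not the identity span
    (mkSpan Bool sw (𝟙 Bool) ≠ mkSpan Bool (𝟙 Bool) (𝟙 Bool)) ∧
    -- the span (!,!) : * → * factors as [!,1] ∘ [1,!] through 2
    (S.comp (mkSpan Bool bang (𝟙 Bool)) (mkSpan Bool (𝟙 Bool) bang)
        = mkSpan Bool bang bang) ∧
    -- the identity span is a comparison morphism from this factorization to itself
    (S.comp (mkSpan Bool bang (𝟙 Bool)) (mkSpan Bool (𝟙 Bool) (𝟙 Bool))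
          = mkSpan Bool bang (𝟙 Bool) ∧
      S.comp (mkSpan Bool (𝟙 Bool) (𝟙 Bool)) (mkSpan Bool (𝟙 Bool) bang)
          = mkSpan Bool (𝟙 Bool) bang) ∧
    -- and so is [sw, 1]
    (S.comp (mkSpan Bool bang (𝟙 Bool)) (mkSpan Bool sw (𝟙 Bool))
          = mkSpan Bool bang (𝟙 Bool) ∧
      S.comp (mkSpan Bool sw (𝟙 Bool)) (mkSpan Bool (𝟙 Bool) bang)
          = mkSpan Bool (𝟙 Bool) bang) ∧
    -- hence the comparison morphism is not unique
    ¬ (∃! θ : SpanHom (Type 0) Bool Bool,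
        S.comp (mkSpan Bool bang (𝟙 Bool)) θ = mkSpan Bool bang (𝟙 Bool) ∧
        S.comp θ (mkSpan Bool (𝟙 Bool) bang) = mkSpan Bool (𝟙 Bool) bang) := by
  have hbang : ∀ (f : Bool ⟶ Bool), f ≫ bang = bang := fun f => rfl
  have hne : mkSpan Bool sw (𝟙 Bool) ≠ mkSpan Bool (𝟙 Bool) (𝟙 Bool) := by
    rw [Ne, mkSpan_eq_iff]
    rintro ⟨e, h1, h2⟩
    simp only [Category.comp_id] at h1 h2
    rw [h1] at h2
    have := congrArg (fun f : Bool ⟶ Bool => f true) h2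
    simp [sw] at this
  have hid : ∀ {a c : Type 0} (l : Bool ⟶ a) (r : Bool ⟶ c),
      S.comp (mkSpan Bool l (𝟙 Bool)) (mkSpan Bool (𝟙 Bool) r) = mkSpan Bool l r := by
    intro a c l r
    rw [show mkSpan Bool l (𝟙 Bool) = Quot.mk _ ⟨Bool, l, 𝟙 Bool⟩ from rfl,
      show mkSpan Bool (𝟙 Bool) r = Quot.mk _ ⟨Bool, 𝟙 Bool, r⟩ from rfl,
      S.compat _ _ Bool (𝟙 _) (𝟙 _) IsPullback.of_id_fst]
    simp [mkSpan]
    rfl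
  have hsw : S.comp (mkSpan Bool bang (𝟙 Bool)) (mkSpan Bool sw (𝟙 Bool))
      = mkSpan Bool bang (𝟙 Bool) := by
    rw [show mkSpan Bool bang (𝟙 Bool) = Quot.mk _ ⟨Bool, bang, 𝟙 Bool⟩ from rfl,
      show mkSpan Bool sw (𝟙 Bool) = Quot.mk _ ⟨Bool, sw, 𝟙 Bool⟩ from rfl,
      S.compat _ _ Bool sw (𝟙 _) ?_]
    · show mkSpan Bool (sw ≫ bang) (𝟙 _ ≫ 𝟙 _) = _
      rw [hbang sw]; simp only [Category.comp_id]; rfl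
    · exact IsPullback.of_horiz_isIso ⟨by simp⟩
  have hcmp : S.comp (mkSpan Bool sw (𝟙 Bool)) (mkSpan Bool (𝟙 Bool) bang)
      = mkSpan Bool (𝟙 Bool) bang := by
    rw [hid, mkSpan_eq_iff]
    exact ⟨swIso, by simp; rfl, rfl⟩
  refine ⟨hne, ?_, ⟨?_, ?_⟩, ⟨hsw, hcmp⟩, ?_⟩
  · rw [hid]
  · rw [hid]
  · rw [hid]
  · rintro ⟨θ, ⟨h1, h2⟩, huniq⟩
    have e1 : mkSpan Bool (𝟙 Bool) (𝟙 Bool) = θ := by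
      apply huniq
      exact ⟨hid _ _, hid _ _⟩
    have e2 : mkSpan Bool sw (𝟙 Bool) = θ := by
      apply huniq
      exact ⟨hsw, hcmp⟩
    exact hne (e2.trans e1.symm)


end Paper
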